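/- Every (L0, L1)-smooth function bounded below is (H0, H1)-smooth: if f: ℝ^d → ℝ is twice continuously differentiable with f* > −∞ and satisfies ‖∇²f(w)‖ ≤ L0 + L1‖∇f(w)‖ for all w, together with the auxiliary bound ‖∇f(w)‖² ≤ (2/ν)(L0 + L1‖∇f(w)‖)(f(w) − f*) where ν satisfies ν = e^{−ν}, then ‖∇²f(w)‖ ≤ H0 + H1(f(w) − f*) holds with H0 = L0 + L0·L1/ν and H1 = (4L1² + νL1)/(2ν). -/

import Mathlib

lemma key_alg (L0 L1 ν g Δ : ℝ) (hL0 : 0 ≤ L0) (hL1 : 0 ≤ L1) (hν : 0 < ν)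
    (hg : 0 ≤ g) (hΔ : 0 ≤ Δ) (h : g ^ 2 ≤ (2 / ν) * (L0 + L1 * g) * Δ) :
    L1 * g ≤ L0 * L1 / ν + ((4 * L1 ^ 2 + ν * L1) / (2 * ν)) * Δ := by
  have h' : ν * g ^ 2 ≤ 2 * (L0 + L1 * g) * Δ := by
    have h2 := mul_le_mul_of_nonneg_left h hν.le
    calc ν * g ^ 2 ≤ ν * (2 / ν * (L0 + L1 * g) * Δ) := h2
      _ = 2 * (L0 + L1 * g) * Δ := by field_simp
  have h'' : (ν * g) ^ 2 ≤ 2 * ν * L0 * Δ + 2 * L1 * Δ * (ν * g) := by nlinarith [hν]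
  have hT : (0:ℝ) ≤ L0 + ν * Δ / 2 := by positivity
  have hX : (0:ℝ) ≤ ν * g := by positivity
  have hXg : ν * g ≤ L0 + 2 * L1 * Δ + ν * Δ / 2 := by
    nlinarith [sq_nonneg (2 * L0 - ν * Δ), hT, hX, h'', mul_nonneg hL1 hΔ,
      mul_nonneg (mul_nonneg hL1 hΔ) hT]
  have hmul := mul_le_mul_of_nonneg_left hXg hL1
  rw [show L0 * L1 / ν + ((4 * L1 ^ 2 + ν * L1) / (2 * ν)) * Δ
      = (2 * L0 * L1 + (4 * L1 ^ 2 + ν * L1) * Δ) / (2 * ν) by field_simp,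
    le_div_iff₀ (by positivity)]
  nlinarith [hmul]


/-- Every `(L0,L1)`-smooth function bounded below is `(H0,H1)`-smooth. -/
theorem stmt_2 {d : ℕ} (f : EuclideanSpace ℝ (Fin d) → ℝ)
    (L0 L1 ν fstar : ℝ) (hL0 : 0 ≤ L0) (hL1 : 0 ≤ L1)
    (hν : ν = Real.exp (-ν))
    (hf : ContDiff ℝ 2 f)
    (hfstar : IsGLB (Set.range f) fstar)
    (hL : ∀ w, ‖iteratedFDeriv ℝ 2 f w‖ ≤ L0 + L1 * ‖gradient f w‖)
    (haux : ∀ w, ‖gradient f w‖ ^ 2 ≤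
        (2 / ν) * (L0 + L1 * ‖gradient f w‖) * (f w - fstar)) :
    ∀ w, ‖iteratedFDeriv ℝ 2 f w‖ ≤
        (L0 + L0 * L1 / ν) + ((4 * L1 ^ 2 + ν * L1) / (2 * ν)) * (f w - fstar) := by
  intro w
  have hν0 : 0 < ν := hν ▸ Real.exp_pos _
  have hΔ : 0 ≤ f w - fstar := by
    have := hfstar.1 (Set.mem_range_self w)
    linarith
  have key := key_alg L0 L1 ν ‖gradient f w‖ (f w - fstar) hL0 hL1 hν0
    (norm_nonneg _) hΔ (haux w)
  have := hL w
  linarith
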